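/- Let R be a commutative noetherian ring of prime characteristic p and let (M, κ) be a finitely generated R-module with a Cartier structure κ : M → M (additive, κ(r^p m) = r κ(m)). Let I ⊆ R be an ideal. Then the inclusion of the submodule {m ∈ M : I m = 0} into the local cohomology submodule Γ_I(M) = {m ∈ M : I^k m = 0 for some k} is a nil-isomorphism: its cokernel C (with the induced Cartier structure) satisfies that for every c ∈ C there exists e with κ^e(R·c) = 0 in C; more precisely I · κ^e(m) = 0 for every m ∈ Γ_I(M) and e sufficiently large (depending on m). -/

import Mathlib

/-- Over a noetherian ring `R` of characteristic `p`, for a finitely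
generated Cartier module `(M, κ)` and an ideal `I`, the inclusion of the `I`-torsion
submodule `{m : I • m = 0}` into `Γ_I(M) = {m : ∃ k, I^k • m = 0}` is a nil-isomorphism:
for every `m ∈ Γ_I(M)` and all sufficiently large `e` one has `I • κ^[e] m = 0`
(so the cokernel of the inclusion is locally nilpotent). -/
theorem torsion_inclusion_nil_isomorphism
    {R M : Type*} [CommRing R] [IsNoetherianRing R]
    [AddCommGroup M] [Module R M] [Module.Finite R M]
    (p : ℕ) [Fact p.Prime] [CharP R p]
    (κ : M →+ M) (hκ : ∀ (r : R) (m : M), κ (r ^ p • m) = r • κ m)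
    (I : Ideal R) :
    ∀ m : M, (∃ k : ℕ, ∀ a ∈ I ^ k, a • m = 0) →
      ∃ e₀ : ℕ, ∀ e ≥ e₀, ∀ a ∈ I, a • (κ^[e] m) = 0 := by
  -- key: κ^[e] (r^(p^e) • m) = r • κ^[e] m
  have key : ∀ (e : ℕ) (r : R) (m : M), κ^[e] (r ^ (p ^ e) • m) = r • κ^[e] m := by
    intro e
    induction e with
    | zero => intro r m; simp
    | succ e ih =>
      intro r m
      have : r ^ p ^ (e + 1) = (r ^ p ^ e) ^ p := by
        rw [← pow_mul, pow_succ]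
      rw [Function.iterate_succ_apply, this]
      calc κ^[e] (κ ((r ^ p ^ e) ^ p • m)) = κ^[e] ((r ^ p ^ e) • κ m) := by rw [hκ]
        _ = r • κ^[e] (κ m) := ih r (κ m)
        _ = r • κ^[e+1] m := by rw [Function.iterate_succ_apply]
  rintro m ⟨k, hk⟩
  refine ⟨k, fun e he a ha => ?_⟩
  have hpe : k ≤ p ^ e := le_trans he (Nat.le_of_lt (Nat.lt_pow_self (Fact.out (p := p.Prime)).one_lt : e < p ^ e))
  have hmem : a ^ (p ^ e) ∈ I ^ k := by
    have : a ^ (p ^ e) = a ^ (p ^ e - k) * a ^ k := by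
      rw [← pow_add, Nat.sub_add_cancel hpe]
    rw [this]
    exact Ideal.mul_mem_left _ _ (Ideal.pow_mem_pow ha k)
  have : κ^[e] (a ^ (p ^ e) • m) = a • κ^[e] m := key e a m
  rw [← this, hk _ hmem]
  simp [Function.iterate_fixed (map_zero κ)]
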